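/- For every integer i ≥ 1, the learning-rate weights satisfy Σ_{n=i}^∞ α_n^i = 1 + 1/H. -/

import Mathlib

open scoped BigOperators

noncomputable section

/-- The per-step learning rate `α_t = (H+1)/(H+t)`. -/
def alphaT (H t : ℕ) : ℝ := (H + 1) / (H + t)

/-- The aggregated learning-rate weights `α_n^i`:
`α_0^0 = 1`, `α_n^0 = 0` for `n ≥ 1`, and `α_n^i = α_i ∏_{j=i+1}^n (1 - α_j)` for `1 ≤ i ≤ n`. -/
def alphaW (H n i : ℕ) : ℝ :=
  if i = 0 then (if n = 0 then 1 else 0)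
  else alphaT H i * ∏ j ∈ Finset.Icc (i + 1) n, (1 - alphaT H j)

/-- For every `i ≥ 1`, `∑_{n=i}^∞ α_n^i = 1 + 1/H`. -/
theorem alphaW_tsum_eq (H : ℕ) (hH : 1 ≤ H) (i : ℕ) (hi : 1 ≤ i) :
    ∑' m : ℕ, alphaW H (i + m) i = 1 + 1 / (H : ℝ) := by
  have hi0 : i ≠ 0 := by omega
  have hHpos : (0:ℝ) < H := by exact_mod_cast hH
  have hH0 : (H:ℝ) ≠ 0 := ne_of_gt hHpos
  -- product notation
  set P : ℕ → ℝ := fun m => ∏ j ∈ Finset.Icc (i + 1) (i + m), (1 - alphaT H j) with hP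
  set T : ℕ → ℝ := fun m => alphaT H i * (((H:ℝ) + i + m) / H) * P m with hT
  have hone : ∀ j : ℕ, 1 ≤ j → 1 - alphaT H j = ((j:ℝ) - 1) / ((H:ℝ) + j) := by
    intro j hj
    have hj1 : (1:ℝ) ≤ (j:ℝ) := by exact_mod_cast hj
    have hHj : (H:ℝ) + j ≠ 0 := by positivity
    rw [alphaT]
    field_simp
    ring
  have hPsucc : ∀ m : ℕ, P (m + 1) = P m * (1 - alphaT H (i + m + 1)) := by
    intro m
    have h : i + 1 ≤ i + m + 1 := by omega
    simp only [hP]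
    rw [show i + (m + 1) = i + m + 1 from rfl, Finset.prod_Icc_succ_top h]
  have hPnonneg : ∀ m : ℕ, 0 ≤ P m := by
    intro m
    apply Finset.prod_nonneg
    intro j hj
    simp only [Finset.mem_Icc] at hj
    rw [hone j (by omega)]
    have : (1:ℝ) ≤ (j:ℝ) := by exact_mod_cast (by omega : 1 ≤ j)
    have : (0:ℝ) < (H:ℝ) + j := by positivity
    apply div_nonneg (by linarith [(by exact_mod_cast (by omega : 1 ≤ j) : (1:ℝ) ≤ (j:ℝ))]) (le_of_lt this)
  have halphaTnonneg : 0 ≤ alphaT H i := by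
    rw [alphaT]; positivity
  have hTnonneg : ∀ m : ℕ, 0 ≤ T m := by
    intro m
    apply mul_nonneg (mul_nonneg halphaTnonneg (by positivity)) (hPnonneg m)
  -- recurrence: T (m+1) = T m * ((i+m)/(H+i+m))
  have hTrec : ∀ m : ℕ, T (m + 1) = T m * (((i:ℝ) + m) / ((H:ℝ) + i + m)) := by
    intro m
    have h1 : 1 - alphaT H (i + m + 1) = (((i:ℝ) + m + 1) - 1) / ((H:ℝ) + ((i:ℝ) + m + 1)) := by
      rw [hone (i + m + 1) (by omega)]
      push_cast
      ring_nf
    have hd1 : (H:ℝ) + i + m ≠ 0 := by positivity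
    have hd2 : (H:ℝ) + ((i:ℝ) + m + 1) ≠ 0 := by positivity
    simp only [hT]
    rw [hPsucc m, h1]
    push_cast
    field_simp
    ring
  -- telescoping step: T m - T (m+1) = alphaW H (i+m) i
  have hstep : ∀ m : ℕ, T m - T (m + 1) = alphaW H (i + m) i := by
    intro m
    rw [hTrec m]
    have hd1 : (H:ℝ) + i + m ≠ 0 := by positivity
    have : alphaW H (i + m) i = alphaT H i * P m := by
      rw [alphaW, if_neg hi0]
    rw [this]
    simp only [hT]
    field_simp
    ring
  -- partial sums
  have hsum : ∀ M : ℕ, ∑ k ∈ Finset.range M, alphaW H (i + k) i = T 0 - T M := by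
    intro M
    induction M with
    | zero => simp
    | succ M ih =>
      rw [Finset.sum_range_succ, ih, ← hstep M]
      ring
  have hT0 : T 0 = 1 + 1 / (H:ℝ) := by
    have hHi : (H:ℝ) + i ≠ 0 := by positivity
    simp only [hT, hP]
    rw [alphaT]
    simp only [Nat.cast_zero, add_zero]
    rw [Finset.Icc_eq_empty (by omega), Finset.prod_empty]
    field_simp
  -- bound T m ≤ T 0 * i / (i + m)
  have hbound : ∀ m : ℕ, T m ≤ T 0 * i / ((i:ℝ) + m) := by
    intro m
    induction m with
    | zero =>
      simp only [Nat.cast_zero, add_zero]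
      rw [mul_div_assoc, div_self (by positivity : (i:ℝ) ≠ 0), mul_one]
    | succ m ih =>
      rw [hTrec m]
      have h1 : ((i:ℝ) + m) / ((H:ℝ) + i + m) ≤ ((i:ℝ) + m) / ((i:ℝ) + (m + 1)) := by
        apply div_le_div_of_nonneg_left (by positivity) (by positivity)
        have : (1:ℝ) ≤ (H:ℝ) := by exact_mod_cast hH
        linarith
      calc T m * (((i:ℝ) + m) / ((H:ℝ) + i + m))
          ≤ (T 0 * i / ((i:ℝ) + m)) * (((i:ℝ) + m) / ((i:ℝ) + (m + 1))) := by
            apply mul_le_mul ih h1 (by positivity)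
            have := hTnonneg 0
            positivity
        _ = T 0 * i / ((i:ℝ) + ((m + 1 : ℕ):ℝ)) := by
            field_simp
            rw [Nat.cast_succ]
  -- T m → 0
  have hTlim : Filter.Tendsto T Filter.atTop (nhds 0) := by
    apply squeeze_zero hTnonneg hbound
    apply Filter.Tendsto.div_atTop tendsto_const_nhds
    apply Filter.tendsto_atTop_add_const_left
    exact tendsto_natCast_atTop_atTop
  -- conclude
  have hps : Filter.Tendsto (fun M => ∑ k ∈ Finset.range M, alphaW H (i + k) i)
      Filter.atTop (nhds (1 + 1 / (H:ℝ))) := by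
    have h := Filter.Tendsto.const_sub (T 0) hTlim
    rw [sub_zero] at h
    have h2 : Filter.Tendsto (fun M => ∑ k ∈ Finset.range M, alphaW H (i + k) i)
        Filter.atTop (nhds (T 0)) := by simpa only [hsum] using h
    rwa [hT0] at h2
  have hnonneg : ∀ m : ℕ, 0 ≤ alphaW H (i + m) i := by
    intro m
    rw [alphaW, if_neg hi0]
    exact mul_nonneg halphaTnonneg (hPnonneg m)
  have := (hasSum_iff_tendsto_nat_of_nonneg hnonneg _).mpr hps
  exact this.tsum_eq
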